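/- arXiv:2303.10676 — 6 statements merged into one kernel-verified Lean document; each statement's English description precedes it below -/
import Mathlib

section
/- Let X₁, X₂ be real normed spaces, V₁ ⊆ X₁ and V₂ ⊆ X₂ nonempty closed convex sets, and let X = X₁ ⊕_∞ X₂ with the maximum norm and V = V₁ × V₂. For any nonempty closed bounded subset B of X, let B(1) and B(2) denote the coordinate projections of B onto X₁ and X₂. Then rad_V(B) = max{rad_{V₁}(B(1)), rad_{V₂}(B(2))}, where rad_V(B) = inf_{v∈V} sup_{b∈B} ‖v−b‖. -/
open Metric Set Bornology Pointwise

/-- The farthest distance `r(v,B) = sup_{b ∈ B} ‖v - b‖`. -/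
noncomputable def farr {X : Type*} [NormedAddCommGroup X] (v : X) (B : Set X) : ℝ :=
  ⨆ b : B, ‖v - (b : X)‖

/-- The restricted Chebyshev radius `rad_V(B) = inf_{v ∈ V} r(v,B)`. -/
noncomputable def rad {X : Type*} [NormedAddCommGroup X] (V B : Set X) : ℝ :=
  ⨅ v : V, farr (v : X) B

lemma farr_nonneg {X : Type*} [NormedAddCommGroup X] (v : X) (B : Set X) :
    0 ≤ farr v B :=
  Real.iSup_nonneg fun _ => norm_nonneg _

lemma ciSup_max' {ι : Type*} [Nonempty ι] {f g : ι → ℝ} (hf : BddAbove (Set.range f))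
    (hg : BddAbove (Set.range g)) :
    (⨆ i, max (f i) (g i)) = max (⨆ i, f i) (⨆ i, g i) := by
  have hb : BddAbove (Set.range fun i => max (f i) (g i)) := by
    obtain ⟨Cf, hCf⟩ := hf; obtain ⟨Cg, hCg⟩ := hg
    refine ⟨max Cf Cg, ?_⟩
    rintro x ⟨i, rfl⟩
    exact max_le_max (hCf ⟨i, rfl⟩) (hCg ⟨i, rfl⟩)
  apply le_antisymm
  · exact ciSup_le fun i => max_le_max (le_ciSup hf i) (le_ciSup hg i)
  · exact max_le (ciSup_le fun i => (le_max_left _ _).trans (le_ciSup hb i))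
      (ciSup_le fun i => (le_max_right _ _).trans (le_ciSup hb i))

theorem stmt0 {X₁ X₂ : Type*} [NormedAddCommGroup X₁] [NormedSpace ℝ X₁]
    [NormedAddCommGroup X₂] [NormedSpace ℝ X₂]
    (V₁ : Set X₁) (V₂ : Set X₂)
    (hV₁ne : V₁.Nonempty) (hV₁c : IsClosed V₁) (hV₁conv : Convex ℝ V₁)
    (hV₂ne : V₂.Nonempty) (hV₂c : IsClosed V₂) (hV₂conv : Convex ℝ V₂)
    (B : Set (X₁ × X₂)) (hBne : B.Nonempty) (hBc : IsClosed B) (hBb : IsBounded B) :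
    rad (V₁ ×ˢ V₂) B = max (rad V₁ (Prod.fst '' B)) (rad V₂ (Prod.snd '' B)) := by
  haveI : Nonempty ↥B := hBne.to_subtype
  haveI : Nonempty ↥V₁ := hV₁ne.to_subtype
  haveI : Nonempty ↥V₂ := hV₂ne.to_subtype
  haveI : Nonempty ↥(V₁ ×ˢ V₂) := (hV₁ne.prod hV₂ne).to_subtype
  haveI : Nonempty ↥(Prod.fst '' B) := (hBne.image _).to_subtype
  haveI : Nonempty ↥(Prod.snd '' B) := (hBne.image _).to_subtype
  obtain ⟨C, hC⟩ := isBounded_iff_forall_norm_le.1 hBb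
  -- boundedness of the relevant ranges
  have hbd1 : ∀ v₁ : X₁, BddAbove (Set.range fun b : ↥(Prod.fst '' B) => ‖v₁ - (b : X₁)‖) := by
    intro v₁
    refine ⟨‖v₁‖ + C, ?_⟩
    rintro x ⟨⟨b₁, ⟨b, hb, rfl⟩⟩, rfl⟩
    calc ‖v₁ - b.1‖ ≤ ‖v₁‖ + ‖b.1‖ := norm_sub_le _ _
      _ ≤ ‖v₁‖ + C := by
        have := (norm_fst_le b).trans (hC b hb); linarith
  have hbd2 : ∀ v₂ : X₂, BddAbove (Set.range fun b : ↥(Prod.snd '' B) => ‖v₂ - (b : X₂)‖) := by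
    intro v₂
    refine ⟨‖v₂‖ + C, ?_⟩
    rintro x ⟨⟨b₂, ⟨b, hb, rfl⟩⟩, rfl⟩
    calc ‖v₂ - b.2‖ ≤ ‖v₂‖ + ‖b.2‖ := norm_sub_le _ _
      _ ≤ ‖v₂‖ + C := by
        have := (norm_snd_le b).trans (hC b hb); linarith
  -- farr splits
  have hfarr : ∀ v₁ : X₁, ∀ v₂ : X₂,
      farr (v₁, v₂) B = max (farr v₁ (Prod.fst '' B)) (farr v₂ (Prod.snd '' B)) := by
    intro v₁ v₂
    have h1 : farr v₁ (Prod.fst '' B) = ⨆ b : B, ‖v₁ - (b : X₁ × X₂).1‖ := by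
      unfold farr
      rw [iSup, iSup]
      congr 1
      ext y
      constructor
      · rintro ⟨⟨b₁, ⟨b, hb, rfl⟩⟩, rfl⟩; exact ⟨⟨b, hb⟩, rfl⟩
      · rintro ⟨⟨b, hb⟩, rfl⟩; exact ⟨⟨b.1, ⟨b, hb, rfl⟩⟩, rfl⟩
    have h2 : farr v₂ (Prod.snd '' B) = ⨆ b : B, ‖v₂ - (b : X₁ × X₂).2‖ := by
      unfold farr
      rw [iSup, iSup]
      congr 1
      ext y
      constructor
      · rintro ⟨⟨b₂, ⟨b, hb, rfl⟩⟩, rfl⟩; exact ⟨⟨b, hb⟩, rfl⟩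
      · rintro ⟨⟨b, hb⟩, rfl⟩; exact ⟨⟨b.2, ⟨b, hb, rfl⟩⟩, rfl⟩
    have hbd1' : BddAbove (Set.range fun b : B => ‖v₁ - (b : X₁ × X₂).1‖) := by
      refine ⟨‖v₁‖ + C, ?_⟩
      rintro x ⟨⟨b, hb⟩, rfl⟩
      calc ‖v₁ - b.1‖ ≤ ‖v₁‖ + ‖b.1‖ := norm_sub_le _ _
        _ ≤ ‖v₁‖ + C := by have := (norm_fst_le b).trans (hC b hb); linarith
    have hbd2' : BddAbove (Set.range fun b : B => ‖v₂ - (b : X₁ × X₂).2‖) := by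
      refine ⟨‖v₂‖ + C, ?_⟩
      rintro x ⟨⟨b, hb⟩, rfl⟩
      calc ‖v₂ - b.2‖ ≤ ‖v₂‖ + ‖b.2‖ := norm_sub_le _ _
        _ ≤ ‖v₂‖ + C := by have := (norm_snd_le b).trans (hC b hb); linarith
    have hnorm : ∀ b : B, ‖((v₁, v₂) : X₁ × X₂) - (b : X₁ × X₂)‖ =
        max ‖v₁ - (b : X₁ × X₂).1‖ ‖v₂ - (b : X₁ × X₂).2‖ := by
      intro b; rw [Prod.norm_def]; rfl
    rw [h1, h2, ← ciSup_max' hbd1' hbd2']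
    unfold farr
    exact iSup_congr hnorm
  -- bddBelow for the infima
  have hbb1 : BddBelow (Set.range fun v : V₁ => farr (v : X₁) (Prod.fst '' B)) :=
    ⟨0, by rintro x ⟨v, rfl⟩; exact farr_nonneg _ _⟩
  have hbb2 : BddBelow (Set.range fun v : V₂ => farr (v : X₂) (Prod.snd '' B)) :=
    ⟨0, by rintro x ⟨v, rfl⟩; exact farr_nonneg _ _⟩
  have hbbP : BddBelow (Set.range fun v : ↥(V₁ ×ˢ V₂) => farr (v : X₁ × X₂) B) :=
    ⟨0, by rintro x ⟨v, rfl⟩; exact farr_nonneg _ _⟩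
  apply le_antisymm
  · apply le_of_forall_pos_le_add
    intro ε hε
    obtain ⟨v₁, hv₁⟩ := exists_lt_of_ciInf_lt (a := rad V₁ (Prod.fst '' B) + ε)
      (lt_add_of_pos_right _ hε)
    obtain ⟨v₂, hv₂⟩ := exists_lt_of_ciInf_lt (a := rad V₂ (Prod.snd '' B) + ε)
      (lt_add_of_pos_right _ hε)
    have hmem : ((v₁ : X₁), (v₂ : X₂)) ∈ V₁ ×ˢ V₂ := ⟨v₁.2, v₂.2⟩
    have := ciInf_le hbbP ⟨_, hmem⟩
    refine this.trans ?_
    rw [hfarr]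
    calc max (farr (v₁ : X₁) (Prod.fst '' B)) (farr (v₂ : X₂) (Prod.snd '' B))
        ≤ max (rad V₁ (Prod.fst '' B) + ε) (rad V₂ (Prod.snd '' B) + ε) :=
          max_le_max hv₁.le hv₂.le
      _ = max (rad V₁ (Prod.fst '' B)) (rad V₂ (Prod.snd '' B)) + ε := by
          rw [max_add_add_right]
  · apply le_ciInf
    intro v
    have hv1 : (v : X₁ × X₂).1 ∈ V₁ := v.2.1
    have hv2 : (v : X₁ × X₂).2 ∈ V₂ := v.2.2
    have : farr (v : X₁ × X₂) B =
        max (farr (v : X₁ × X₂).1 (Prod.fst '' B)) (farr (v : X₁ × X₂).2 (Prod.snd '' B)) := by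
      rw [← hfarr]
    rw [this]
    exact max_le_max (ciInf_le hbb1 ⟨_, hv1⟩) (ciInf_le hbb2 ⟨_, hv2⟩)
end

section
/- Let X be a Banach space, V ⊆ X a nonempty closed convex set, and 𝓕 a family of nonempty closed bounded subsets of X such that cent_V(F) ≠ ∅ for all F ∈ 𝓕. Let F ∈ 𝓕 and α > rad_V(F). Then for each ε > 0 there exists δ > 0 such that for every F′ ∈ 𝓕 with d_H(F,F′) < δ and every scalar β with |α − β| < δ, the Hausdorff distance between ⋂_{z∈F} B_X[z,α] ∩ V and ⋂_{z′∈F′} B_X[z′,β] ∩ V is less than ε. -/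
open Metric Set Bornology Pointwise

/-- The set of restricted Chebyshev centers of `B` in `V`. -/
noncomputable def cheb {X : Type*} [NormedAddCommGroup X] (V B : Set X) : Set X :=
  {v ∈ V | farr v B = rad V B}

lemma farr_bddAbove {X : Type*} [NormedAddCommGroup X] (x : X) {B : Set X} (hB : IsBounded B) :
    BddAbove (Set.range fun b : B => ‖x - (b : X)‖) := by
  obtain ⟨R, hR⟩ := hB.subset_closedBall 0
  refine ⟨‖x‖ + R, ?_⟩
  rintro _ ⟨b, rfl⟩
  have hb : ‖(b : X)‖ ≤ R := by
    have := hR b.2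
    simpa [Metric.mem_closedBall, dist_zero_right] using this
  calc ‖x - (b : X)‖ ≤ ‖x‖ + ‖(b : X)‖ := norm_sub_le _ _
    _ ≤ ‖x‖ + R := by linarith

lemma le_farr {X : Type*} [NormedAddCommGroup X] (x : X) {B : Set X} (hB : IsBounded B)
    {z : X} (hz : z ∈ B) : ‖x - z‖ ≤ farr x B :=
  le_ciSup (farr_bddAbove x hB) (⟨z, hz⟩ : B)

lemma farr_le {X : Type*} [NormedAddCommGroup X] (x : X) {B : Set X} (hne : B.Nonempty)
    {r : ℝ} (h : ∀ z ∈ B, ‖x - z‖ ≤ r) : farr x B ≤ r := by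
  haveI := hne.to_subtype
  exact ciSup_le fun b => h b b.2

theorem stmt6 {X : Type*} [NormedAddCommGroup X] [NormedSpace ℝ X] [CompleteSpace X]
    (V : Set X) (hVne : V.Nonempty) (hVc : IsClosed V) (hVconv : Convex ℝ V)
    (𝓕 : Set (Set X))
    (h𝓕 : ∀ F ∈ 𝓕, F.Nonempty ∧ IsClosed F ∧ IsBounded F)
    (hrcp : ∀ F ∈ 𝓕, (cheb V F).Nonempty)
    (F : Set X) (hF : F ∈ 𝓕) (α : ℝ) (hα : rad V F < α) :
    ∀ ε > (0 : ℝ), ∃ δ > (0 : ℝ), ∀ F' ∈ 𝓕, hausdorffDist F F' < δ →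
      ∀ β : ℝ, |α - β| < δ →
        hausdorffDist ((⋂ z ∈ F, closedBall z α) ∩ V)
          ((⋂ z' ∈ F', closedBall z' β) ∩ V) < ε := by
  intro ε hε
  obtain ⟨hFne, hFcl, hFbd⟩ := h𝓕 F hF
  obtain ⟨c, hcV, hcrad⟩ := hrcp F hF
  set r := rad V F with hrdef
  obtain ⟨z0, hz0⟩ := hFne
  have hcz0 : ‖c - z0‖ ≤ r := hcrad ▸ le_farr c hFbd hz0
  have hr0 : (0 : ℝ) ≤ r := le_trans (norm_nonneg _) hcz0
  set M := r + α + 2 with hMdef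
  have hM0 : (0 : ℝ) < M := by linarith
  have hαr : (0 : ℝ) < α - r := by linarith
  set δ := min 1 (min ((α - r)/2) (ε * (α - r) / (8 * M))) with hδdef
  have hδ1 : δ ≤ 1 := min_le_left _ _
  have hδ2 : δ ≤ (α - r)/2 := le_trans (min_le_right _ _) (min_le_left _ _)
  have hδ3 : δ ≤ ε * (α - r) / (8 * M) := le_trans (min_le_right _ _) (min_le_right _ _)
  have hδpos : 0 < δ := by
    apply lt_min one_pos
    apply lt_min (by linarith)
    positivity
  refine ⟨δ, hδpos, ?_⟩
  intro F' hF' hdist β hβ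
  obtain ⟨hF'ne, hF'cl, hF'bd⟩ := h𝓕 F' hF'
  have hne_top : EMetric.hausdorffEdist F F' ≠ ⊤ :=
    hausdorffEdist_ne_top_of_nonempty_of_bounded ⟨z0, hz0⟩ hF'ne hFbd hF'bd
  have hβ1 : α - δ < β := by cases' abs_lt.mp hβ with h1 h2; linarith
  have hβ2 : β < α + δ := by cases' abs_lt.mp hβ with h1 h2; linarith
  set lam := 4*δ/(α + 2*δ - r) with hlamdef
  have hden : 0 < α + 2*δ - r := by linarith
  have hlam0 : 0 ≤ lam := by positivity
  have hlam1 : lam ≤ 1 := by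
    rw [div_le_one hden]; linarith
  -- key construction
  have key : ∀ x ∈ V, farr x F ≤ α + 2*δ →
      ∃ y ∈ V, farr y F ≤ α - 2*δ ∧ dist y x ≤ ε/2 := by
    intro x hxV hxf
    refine ⟨lam • c + (1 - lam) • x, hVconv hcV hxV hlam0 (by linarith) (by ring), ?_, ?_⟩
    · apply farr_le _ ⟨z0, hz0⟩
      intro z hz
      have h1 : ‖c - z‖ ≤ r := hcrad ▸ le_farr c hFbd hz
      have h2 : ‖x - z‖ ≤ α + 2*δ := le_trans (le_farr x hFbd hz) hxf
      have heq : lam • c + (1 - lam) • x - z = lam • (c - z) + (1 - lam) • (x - z) := by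
        module
      calc ‖lam • c + (1 - lam) • x - z‖
          ≤ ‖lam • (c - z)‖ + ‖(1 - lam) • (x - z)‖ := by rw [heq]; exact norm_add_le _ _
        _ = lam * ‖c - z‖ + (1 - lam) * ‖x - z‖ := by
            rw [norm_smul, norm_smul, Real.norm_of_nonneg hlam0,
              Real.norm_of_nonneg (by linarith : (0:ℝ) ≤ 1 - lam)]
        _ ≤ lam * r + (1 - lam) * (α + 2*δ) := by
            gcongr <;> linarith
        _ = α + 2*δ - lam * (α + 2*δ - r) := by ring
        _ = α - 2*δ := by
            rw [hlamdef, div_mul_cancel₀ _ (ne_of_gt hden)]; ring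
    · have heq : lam • c + (1 - lam) • x - x = lam • (c - x) := by module
      have hcx : ‖c - x‖ ≤ M := by
        have h2 : ‖x - z0‖ ≤ α + 2*δ := le_trans (le_farr x hFbd hz0) hxf
        calc ‖c - x‖ ≤ ‖c - z0‖ + ‖z0 - x‖ := by
              have : c - x = (c - z0) + (z0 - x) := by abel
              rw [this]; exact norm_add_le _ _
          _ = ‖c - z0‖ + ‖x - z0‖ := by rw [norm_sub_rev z0 x]
          _ ≤ r + (α + 2*δ) := by linarith
          _ ≤ M := by rw [hMdef]; linarith
      have : dist (lam • c + (1 - lam) • x) x = lam * ‖c - x‖ := by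
        rw [dist_eq_norm, heq, norm_smul, Real.norm_of_nonneg hlam0]
      rw [this]
      have hlamle : lam ≤ 4*δ/(α - r) := by
        apply div_le_div_of_nonneg_left (by linarith) hαr
        linarith
      calc lam * ‖c - x‖ ≤ (4*δ/(α - r)) * M := by
            apply mul_le_mul hlamle hcx (norm_nonneg _)
            positivity
        _ ≤ (4*(ε * (α - r) / (8 * M))/(α - r)) * M := by gcongr
        _ = ε/2 := by field_simp; ring
  -- membership characterization
  have mem_iff : ∀ (G : Set X) (γ : ℝ) (x : X),
      x ∈ (⋂ z ∈ G, closedBall z γ) ∩ V ↔ (∀ z ∈ G, ‖x - z‖ ≤ γ) ∧ x ∈ V := by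
    intro G γ x
    simp [Set.mem_iInter, Metric.mem_closedBall, dist_eq_norm]
  -- if farr y F ≤ α - 2δ and y ∈ V then y is in both sets
  have both : ∀ y ∈ V, farr y F ≤ α - 2*δ →
      y ∈ (⋂ z ∈ F, closedBall z α) ∩ V ∧ y ∈ (⋂ z' ∈ F', closedBall z' β) ∩ V := by
    intro y hyV hyf
    constructor
    · rw [mem_iff]
      exact ⟨fun z hz => le_trans (le_trans (le_farr y hFbd hz) hyf) (by linarith), hyV⟩
    · rw [mem_iff]
      refine ⟨fun z' hz' => ?_, hyV⟩
      have hinf : infDist z' F < δ := by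
        calc infDist z' F ≤ hausdorffDist F' F :=
              infDist_le_hausdorffDist_of_mem hz' (by rwa [EMetric.hausdorffEdist_comm])
          _ = hausdorffDist F F' := hausdorffDist_comm
          _ < δ := hdist
      obtain ⟨z, hz, hzz'⟩ := (infDist_lt_iff ⟨z0, hz0⟩).mp hinf
      have h1 : ‖y - z‖ ≤ α - 2*δ := le_trans (le_farr y hFbd hz) hyf
      have : ‖y - z'‖ ≤ ‖y - z‖ + ‖z - z'‖ := by
        have he : y - z' = (y - z) + (z - z') := by abel
        rw [he]; exact norm_add_le _ _
      have hzz'' : ‖z - z'‖ < δ := by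
        rw [← dist_eq_norm, dist_comm]; exact hzz'
      linarith
  -- each point of the first set is near the second set and conversely
  have h1 : ∀ x ∈ (⋂ z ∈ F, closedBall z α) ∩ V,
      infDist x ((⋂ z' ∈ F', closedBall z' β) ∩ V) ≤ ε/2 := by
    intro x hx
    rw [mem_iff] at hx
    have hxf : farr x F ≤ α + 2*δ :=
      farr_le x ⟨z0, hz0⟩ fun z hz => le_trans (hx.1 z hz) (by linarith)
    obtain ⟨y, hyV, hyf, hyx⟩ := key x hx.2 hxf
    have := (both y hyV hyf).2
    calc infDist x ((⋂ z' ∈ F', closedBall z' β) ∩ V) ≤ dist x y := infDist_le_dist_of_mem this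
      _ = dist y x := dist_comm x y
      _ ≤ ε/2 := hyx
  have h2 : ∀ x ∈ (⋂ z' ∈ F', closedBall z' β) ∩ V,
      infDist x ((⋂ z ∈ F, closedBall z α) ∩ V) ≤ ε/2 := by
    intro x hx
    rw [mem_iff] at hx
    have hxf : farr x F ≤ α + 2*δ := by
      apply farr_le x ⟨z0, hz0⟩
      intro z hz
      have hinf : infDist z F' < δ :=
        lt_of_le_of_lt (infDist_le_hausdorffDist_of_mem hz hne_top) hdist
      obtain ⟨z', hz', hzz'⟩ := (infDist_lt_iff hF'ne).mp hinf
      have h1 : ‖x - z'‖ ≤ β := hx.1 z' hz'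
      have : ‖x - z‖ ≤ ‖x - z'‖ + ‖z' - z‖ := by
        have he : x - z = (x - z') + (z' - z) := by abel
        rw [he]; exact norm_add_le _ _
      have hzz'' : ‖z' - z‖ < δ := by
        rw [← dist_eq_norm, dist_comm]; exact hzz'
      linarith
    obtain ⟨y, hyV, hyf, hyx⟩ := key x hx.2 hxf
    have := (both y hyV hyf).1
    calc infDist x ((⋂ z ∈ F, closedBall z α) ∩ V) ≤ dist x y := infDist_le_dist_of_mem this
      _ = dist y x := dist_comm x y
      _ ≤ ε/2 := hyx
  have : hausdorffDist ((⋂ z ∈ F, closedBall z α) ∩ V) ((⋂ z' ∈ F', closedBall z' β) ∩ V) ≤ ε/2 :=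
    hausdorffDist_le_of_infDist (by linarith) h1 h2
  linarith
end

section
/- The triplet (ℓ_∞, B_{c₀}, CB(ℓ_∞)) has property-(P₁): for every nonempty closed bounded subset B of ℓ_∞, the set cent_{B_{c₀}}(B) of restricted Chebyshev centers of B in the closed unit ball of c₀ is nonempty, and for each ε > 0 there exists δ > 0 such that every f in the unit ball of c₀ with r(f,B) ≤ rad_{B_{c₀}}(B) + δ lies within distance ε of cent_{B_{c₀}}(B). -/
open Metric Set Bornology Pointwise

/-- The subset of `ℓ∞` consisting of sequences converging to `0`, i.e. `c₀`. -/
def czero : Set (lp (fun _ : ℕ => ℝ) ⊤) :=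
  {f | Filter.Tendsto (fun n => f n) Filter.atTop (nhds 0)}

namespace Stmt12Aux

noncomputable abbrev Xs : Type := lp (fun _ : ℕ => ℝ) ⊤

/-- The unit ball of `c₀`. -/
noncomputable def Vc : Set Xs := czero ∩ closedBall 0 1

noncomputable def aB (B : Set Xs) (n : ℕ) : ℝ := sInf ((fun b : Xs => b n) '' B)
noncomputable def AB (B : Set Xs) (n : ℕ) : ℝ := sSup ((fun b : Xs => b n) '' B)
noncomputable def mB (B : Set Xs) (n : ℕ) : ℝ := (aB B n + AB B n) / 2
noncomputable def sB (B : Set Xs) (n : ℕ) : ℝ := (AB B n - aB B n) / 2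

variable {B : Set Xs} {M : ℝ}

set_option synthInstance.maxHeartbeats 1000000 in
lemma coord_abs_le (v : Xs) (n : ℕ) : |v n| ≤ ‖v‖ := by
  have h := lp.norm_apply_le_norm ENNReal.top_ne_zero v n
  rwa [Real.norm_eq_abs] at h

lemma coord_le (hM : ∀ b ∈ B, ‖b‖ ≤ M) {b : Xs} (hb : b ∈ B) (n : ℕ) : |b n| ≤ M :=
  (coord_abs_le b n).trans (hM b hb)

lemma bddAbove_S (hM : ∀ b ∈ B, ‖b‖ ≤ M) (n : ℕ) :
    BddAbove ((fun b : Xs => b n) '' B) := by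
  refine ⟨M, ?_⟩
  rintro x ⟨b, hb, rfl⟩
  exact (le_abs_self _).trans (coord_le hM hb n)

lemma bddBelow_S (hM : ∀ b ∈ B, ‖b‖ ≤ M) (n : ℕ) :
    BddBelow ((fun b : Xs => b n) '' B) := by
  refine ⟨-M, ?_⟩
  rintro x ⟨b, hb, rfl⟩
  have := coord_le hM hb n
  have := neg_abs_le (b n)
  linarith

lemma S_nonempty (hB : B.Nonempty) (n : ℕ) : ((fun b : Xs => b n) '' B).Nonempty :=
  hB.image _

lemma aB_le_coord (hB : B.Nonempty) (hM : ∀ b ∈ B, ‖b‖ ≤ M) {b : Xs} (hb : b ∈ B) (n : ℕ) :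
    aB B n ≤ b n :=
  csInf_le (bddBelow_S hM n) ⟨b, hb, rfl⟩

lemma coord_le_AB (hB : B.Nonempty) (hM : ∀ b ∈ B, ‖b‖ ≤ M) {b : Xs} (hb : b ∈ B) (n : ℕ) :
    b n ≤ AB B n :=
  le_csSup (bddAbove_S hM n) ⟨b, hb, rfl⟩

lemma aB_le_AB (hB : B.Nonempty) (hM : ∀ b ∈ B, ‖b‖ ≤ M) (n : ℕ) : aB B n ≤ AB B n := by
  obtain ⟨b, hb⟩ := hB
  exact (aB_le_coord ⟨b, hb⟩ hM hb n).trans (coord_le_AB ⟨b, hb⟩ hM hb n)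

lemma abs_aB_le (hB : B.Nonempty) (hM : ∀ b ∈ B, ‖b‖ ≤ M) (n : ℕ) : |aB B n| ≤ M := by
  obtain ⟨b, hb⟩ := id hB
  have h1 := aB_le_coord hB hM hb n
  have h2 := coord_le hM hb n
  have h3 : -M ≤ aB B n := le_csInf (S_nonempty hB n) (by
    rintro x ⟨c, hc, rfl⟩
    have := coord_le hM hc n
    have := neg_abs_le (c n)
    linarith)
  rw [abs_le]
  have := le_abs_self (b n)
  exact ⟨h3, by linarith⟩

lemma abs_AB_le (hB : B.Nonempty) (hM : ∀ b ∈ B, ‖b‖ ≤ M) (n : ℕ) : |AB B n| ≤ M := by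
  obtain ⟨b, hb⟩ := id hB
  have h1 := coord_le_AB hB hM hb n
  have h2 := coord_le hM hb n
  have h3 : AB B n ≤ M := csSup_le (S_nonempty hB n) (by
    rintro x ⟨c, hc, rfl⟩
    exact (le_abs_self _).trans (coord_le hM hc n))
  rw [abs_le]
  have := neg_abs_le (b n)
  exact ⟨by linarith, h3⟩

lemma abs_mB_le (hB : B.Nonempty) (hM : ∀ b ∈ B, ‖b‖ ≤ M) (n : ℕ) : |mB B n| ≤ M := by
  have h1 := abs_aB_le hB hM n
  have h2 := abs_AB_le hB hM n
  rw [abs_le] at h1 h2 ⊢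
  unfold mB
  constructor <;> [linarith; linarith]

lemma sB_nonneg (hB : B.Nonempty) (hM : ∀ b ∈ B, ‖b‖ ≤ M) (n : ℕ) : 0 ≤ sB B n := by
  have := aB_le_AB hB hM n; unfold sB; linarith

lemma sB_le (hB : B.Nonempty) (hM : ∀ b ∈ B, ‖b‖ ≤ M) (n : ℕ) : sB B n ≤ M := by
  have h1 := abs_aB_le hB hM n
  have h2 := abs_AB_le hB hM n
  rw [abs_le] at h1 h2
  unfold sB; linarith

lemma bdd_farr (hM : ∀ b ∈ B, ‖b‖ ≤ M) (v : Xs) :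
    BddAbove (Set.range fun b : B => ‖v - (b : Xs)‖) := by
  refine ⟨‖v‖ + M, ?_⟩
  rintro x ⟨b, rfl⟩
  exact (norm_sub_le _ _).trans (by have := hM b b.2; linarith)

lemma farr_nonneg (v : Xs) : 0 ≤ farr v B :=
  Real.iSup_nonneg fun _ => norm_nonneg _

lemma norm_le_farr (hM : ∀ b ∈ B, ‖b‖ ≤ M) (v : Xs) {b : Xs} (hb : b ∈ B) :
    ‖v - b‖ ≤ farr v B :=
  le_ciSup (bdd_farr hM v) (⟨b, hb⟩ : B)

lemma coord_sub_abs (v b : Xs) (n : ℕ) : |v n - b n| ≤ ‖v - b‖ := by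
  have := coord_abs_le (v - b) n
  rwa [lp.coeFn_sub, Pi.sub_apply] at this

lemma abs_max_eq (t a A : ℝ) (h : a ≤ A) :
    |t - (a + A) / 2| + (A - a) / 2 = max (t - a) (A - t) := by
  rcases le_total t ((a + A) / 2) with ht | ht
  · rw [abs_of_nonpos (by linarith), max_eq_right (by linarith)]; ring
  · rw [abs_of_nonneg (by linarith), max_eq_left (by linarith)]; ring

lemma farr_ge (hB : B.Nonempty) (hM : ∀ b ∈ B, ‖b‖ ≤ M) (v : Xs) (n : ℕ) :
    |v n - mB B n| + sB B n ≤ farr v B := by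
  have hid := abs_max_eq (v n) (aB B n) (AB B n) (aB_le_AB hB hM n)
  have hgoal : |v n - mB B n| + sB B n = max (v n - aB B n) (AB B n - v n) := by
    unfold mB sB; exact hid
  rw [hgoal]
  refine max_le ?_ ?_
  · have h1 : v n - farr v B ≤ aB B n := by
      refine le_csInf (S_nonempty hB n) ?_
      rintro x ⟨b, hb, rfl⟩
      have h2 := norm_le_farr hM v hb
      have h3 := coord_sub_abs v b n
      have h4 := le_abs_self (v n - b n)
      linarith
    linarith
  · have h1 : AB B n ≤ v n + farr v B := by
      refine csSup_le (S_nonempty hB n) ?_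
      rintro x ⟨b, hb, rfl⟩
      have h2 := norm_le_farr hM v hb
      have h3 := coord_sub_abs v b n
      have h4 := neg_abs_le (v n - b n)
      linarith
    linarith

lemma farr_eq (hB : B.Nonempty) (hM : ∀ b ∈ B, ‖b‖ ≤ M) (v : Xs) :
    farr v B = ⨆ n, (|v n - mB B n| + sB B n) := by
  haveI : Nonempty ↑B := hB.to_subtype
  have hbdd : BddAbove (Set.range fun n => |v n - mB B n| + sB B n) := by
    refine ⟨‖v‖ + M + M, ?_⟩
    rintro x ⟨n, rfl⟩
    show |v n - mB B n| + sB B n ≤ ‖v‖ + M + M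
    have h1 := coord_abs_le v n
    have h2 := abs_mB_le hB hM n
    have h3 := sB_le hB hM n
    have h4 : |v n - mB B n| ≤ |v n| + |mB B n| := abs_sub _ _
    linarith
  refine le_antisymm (ciSup_le ?_) (ciSup_le fun n => farr_ge hB hM v n)
  rintro ⟨b, hb⟩
  rw [lp.norm_eq_ciSup]
  refine ciSup_le fun n => ?_
  refine le_trans ?_ (le_ciSup hbdd n)
  have h1 : aB B n ≤ b n := aB_le_coord hB hM hb n
  have h2 : b n ≤ AB B n := coord_le_AB hB hM hb n
  have h3 : |v n - b n| ≤ |v n - mB B n| + |mB B n - b n| := abs_sub_le _ _ _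
  have h4 : |mB B n - b n| ≤ sB B n := by
    rw [abs_le]; unfold mB sB at *; constructor <;> linarith
  have h5 : ‖(v - b) n‖ = |v n - b n| := by
    rw [lp.coeFn_sub, Pi.sub_apply, Real.norm_eq_abs]
  rw [h5]; linarith

lemma zero_mem_Vc : (0 : Xs) ∈ Vc := by
  constructor
  · show Filter.Tendsto _ _ _
    simp only [lp.coeFn_zero, Pi.zero_apply]
    exact tendsto_const_nhds
  · simp [Vc]

noncomputable instance : Nonempty ↥Vc := ⟨⟨0, zero_mem_Vc⟩⟩

lemma norm_le_one_of_mem {v : Xs} (hv : v ∈ Vc) : ‖v‖ ≤ 1 := by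
  have := hv.2
  rwa [mem_closedBall_zero_iff] at this

lemma bddBelow_rad : BddBelow (Set.range fun v : ↥Vc => farr (v : Xs) B) := by
  refine ⟨0, ?_⟩
  rintro x ⟨v, rfl⟩
  exact farr_nonneg _

lemma r_ge1 (hB : B.Nonempty) (hM : ∀ b ∈ B, ‖b‖ ≤ M) (n : ℕ) :
    sB B n + max 0 (|mB B n| - 1) ≤ rad Vc B := by
  refine le_ciInf fun v => ?_
  have h1 := farr_ge hB hM (v : Xs) n
  have h2 : |(v : Xs) n| ≤ 1 := (coord_abs_le _ n).trans (norm_le_one_of_mem v.2)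
  have h3 : |mB B n| - |(v : Xs) n| ≤ |(v : Xs) n - mB B n| := by
    rw [abs_sub_comm]; exact abs_sub_abs_le_abs_sub _ _
  have h4 : (0 : ℝ) ≤ |(v : Xs) n - mB B n| := abs_nonneg _
  have h5 : max 0 (|mB B n| - 1) ≤ |(v : Xs) n - mB B n| := max_le h4 (by linarith)
  linarith

lemma r_eventual (hB : B.Nonempty) (hM : ∀ b ∈ B, ‖b‖ ≤ M) {η : ℝ} (hη : 0 < η) :
    ∀ᶠ n in Filter.atTop, |mB B n| + sB B n ≤ rad Vc B + η := by
  have hlt : rad Vc B < rad Vc B + η / 2 := by linarith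
  obtain ⟨v, hv⟩ := exists_lt_of_ciInf_lt hlt
  have htend : Filter.Tendsto (fun n => (v : Xs) n) Filter.atTop (nhds 0) := v.2.1
  have hev : ∀ᶠ n in Filter.atTop, |(v : Xs) n| < η / 2 := by
    have := htend (Metric.ball_mem_nhds (0 : ℝ) (by linarith : (0:ℝ) < η/2))
    filter_upwards [this] with n hn
    simpa [Real.dist_eq] using hn
  filter_upwards [hev] with n hn
  have h1 := farr_ge hB hM (v : Xs) n
  have h3 : |mB B n| - |(v : Xs) n| ≤ |(v : Xs) n - mB B n| := by
    rw [abs_sub_comm]; exact abs_sub_abs_le_abs_sub _ _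
  linarith

lemma key (hB : B.Nonempty) (hM : ∀ b ∈ B, ‖b‖ ≤ M) (f : Xs) (hf : f ∈ Vc)
    {δ : ℝ} (hδ : 0 < δ) (hfr : farr f B ≤ rad Vc B + δ) :
    ∃ g ∈ cheb Vc B, ‖f - g‖ ≤ δ := by
  set r := rad Vc B with hr
  set lo : ℕ → ℝ := fun n => max (-1) (mB B n - (r - sB B n)) with hlo
  set hi : ℕ → ℝ := fun n => min 1 (mB B n + (r - sB B n)) with hhi
  set g' : ℕ → ℝ := fun n => min (hi n) (max (lo n) (f n)) with hg'
  have hf1 : ∀ n, |f n| ≤ 1 := fun n => (coord_abs_le f n).trans (norm_le_one_of_mem hf)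
  have hrs : ∀ n, max 0 (|mB B n| - 1) ≤ r - sB B n := fun n => by
    have := r_ge1 hB hM n; rw [← hr] at this; linarith
  have hrs0 : ∀ n, 0 ≤ r - sB B n := fun n => le_trans (le_max_left _ _) (hrs n)
  have hrs1 : ∀ n, |mB B n| - 1 ≤ r - sB B n := fun n => le_trans (le_max_right _ _) (hrs n)
  have hlohi : ∀ n, lo n ≤ hi n := by
    intro n
    have h1 := hrs0 n; have h2 := hrs1 n
    have h3 := le_abs_self (mB B n); have h4 := neg_abs_le (mB B n)
    refine max_le (le_min (by norm_num) (by linarith)) (le_min (by linarith) (by linarith))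
  have hg_lo : ∀ n, lo n ≤ g' n := fun n => le_min (hlohi n) (le_max_left _ _)
  have hg_hi : ∀ n, g' n ≤ hi n := fun n => min_le_left _ _
  have hg1 : ∀ n, |g' n| ≤ 1 := by
    intro n
    rw [abs_le]
    constructor
    · exact le_trans (le_max_left _ _) (hg_lo n)
    · exact le_trans (hg_hi n) (min_le_left _ _)
  have hgm : ∀ n, |g' n - mB B n| ≤ r - sB B n := by
    intro n
    rw [abs_le]
    have h1 : mB B n - (r - sB B n) ≤ g' n := le_trans (le_max_right _ _) (hg_lo n)
    have h2 : g' n ≤ mB B n + (r - sB B n) := le_trans (hg_hi n) (min_le_right _ _)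
    constructor <;> linarith
  have hfg : ∀ n, |f n - g' n| ≤ δ := by
    intro n
    have hfb : |f n - mB B n| + sB B n ≤ r + δ := le_trans (farr_ge hB hM f n) hfr
    have habs1 := le_abs_self (f n - mB B n)
    have habs2 : mB B n - f n ≤ |f n - mB B n| := by
      rw [abs_sub_comm]; exact le_abs_self _
    have hfn := hf1 n; rw [abs_le] at hfn
    rcases le_total (f n) (lo n) with hc1 | hc1
    · have hgv : g' n = lo n := by
        rw [hg']; simp only
        rw [max_eq_left hc1, min_eq_right (hlohi n)]
      rw [hgv, abs_le]
      rcases le_total (-1 : ℝ) (mB B n - (r - sB B n)) with hc2 | hc2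
      · have hlov : lo n = mB B n - (r - sB B n) := max_eq_right hc2
        rw [hlov] at hc1 ⊢
        constructor <;> linarith
      · have hlov : lo n = -1 := max_eq_left hc2
        rw [hlov] at hc1 ⊢
        constructor <;> linarith
    · rcases le_total (f n) (hi n) with hc2 | hc2
      · have hgv : g' n = f n := by
          rw [hg']; simp only
          rw [max_eq_right hc1, min_eq_right hc2]
        rw [hgv]; simpa using hδ.le
      · have hgv : g' n = hi n := by
          rw [hg']; simp only
          rw [max_eq_right hc1, min_eq_left hc2]
        rw [hgv, abs_le]
        rcases le_total (1 : ℝ) (mB B n + (r - sB B n)) with hc3 | hc3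
        · have hhiv : hi n = 1 := min_eq_left hc3
          rw [hhiv] at hc2 ⊢
          constructor <;> linarith
        · have hhiv : hi n = mB B n + (r - sB B n) := min_eq_right hc3
          rw [hhiv] at hc2 ⊢
          constructor <;> linarith
  have hmem : Memℓp g' ⊤ := memℓp_infty ⟨1, by rintro x ⟨n, rfl⟩; simpa [Real.norm_eq_abs] using hg1 n⟩
  set g : Xs := ⟨g', hmem⟩ with hgdef
  have hgapp : ∀ n, g n = g' n := fun n => rfl
  -- g tends to 0
  have hgc0 : g ∈ czero := by
    show Filter.Tendsto (fun n => g n) Filter.atTop (nhds 0)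
    rw [NormedAddCommGroup.tendsto_nhds_zero]
    intro ε hε
    have hev1 : ∀ᶠ n in Filter.atTop, |f n| < ε / 2 := by
      have := hf.1 (Metric.ball_mem_nhds (0 : ℝ) (by linarith : (0:ℝ) < ε/2))
      filter_upwards [this] with n hn
      simpa [Real.dist_eq] using hn
    have hev2 := r_eventual hB hM (by linarith : (0:ℝ) < ε/2)
    rw [← hr] at hev2
    filter_upwards [hev1, hev2] with n hn1 hn2
    show ‖g' n‖ < ε
    rw [Real.norm_eq_abs]
    have habs1 := le_abs_self (mB B n); have habs2 := neg_abs_le (mB B n)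
    have habsf1 := le_abs_self (f n); have habsf2 := neg_abs_le (f n)
    rcases le_total (f n) (lo n) with hc1 | hc1
    · have hgv : g' n = lo n := by
        rw [hg']; simp only
        rw [max_eq_left hc1, min_eq_right (hlohi n)]
      rw [hgv, abs_lt]
      rcases le_total (-1 : ℝ) (mB B n - (r - sB B n)) with hc2 | hc2
      · have hlov : lo n = mB B n - (r - sB B n) := max_eq_right hc2
        rw [hlov] at hc1 ⊢
        constructor <;> linarith
      · have hlov : lo n = -1 := max_eq_left hc2
        have hfn := hf1 n; rw [abs_le] at hfn
        rw [hlov] at hc1 ⊢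
        constructor <;> linarith
    · rcases le_total (f n) (hi n) with hc2 | hc2
      · have hgv : g' n = f n := by
          rw [hg']; simp only
          rw [max_eq_right hc1, min_eq_right hc2]
        rw [hgv]; linarith [abs_nonneg (f n)]
      · have hgv : g' n = hi n := by
          rw [hg']; simp only
          rw [max_eq_right hc1, min_eq_left hc2]
        rw [hgv, abs_lt]
        rcases le_total (1 : ℝ) (mB B n + (r - sB B n)) with hc3 | hc3
        · have hhiv : hi n = 1 := min_eq_left hc3
          have hfn := hf1 n; rw [abs_le] at hfn
          rw [hhiv] at hc2 ⊢
          constructor <;> linarith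
        · have hhiv : hi n = mB B n + (r - sB B n) := min_eq_right hc3
          rw [hhiv] at hc2 ⊢
          constructor <;> linarith
  have hgball : g ∈ closedBall (0 : Xs) 1 := by
    rw [mem_closedBall_zero_iff]
    exact lp.norm_le_of_forall_le zero_le_one fun n => by
      show ‖g' n‖ ≤ 1
      rw [Real.norm_eq_abs]; exact hg1 n
  have hgV : g ∈ Vc := ⟨hgc0, hgball⟩
  have hgfarr_le : farr g B ≤ r := by
    rw [farr_eq hB hM g]
    refine ciSup_le fun n => ?_
    show |g' n - mB B n| + sB B n ≤ r
    have := hgm n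
    linarith
  have hgfarr_ge : r ≤ farr g B := ciInf_le (bddBelow_rad) (⟨g, hgV⟩ : ↥Vc)
  have hgcheb : g ∈ cheb Vc B := ⟨hgV, le_antisymm hgfarr_le hgfarr_ge⟩
  refine ⟨g, hgcheb, ?_⟩
  refine lp.norm_le_of_forall_le hδ.le fun n => ?_
  have h5 : (f - g) n = f n - g' n := by
    rw [lp.coeFn_sub, Pi.sub_apply]
  rw [h5, Real.norm_eq_abs]
  exact hfg n

end Stmt12Aux

theorem stmt12 :
    ∀ B : Set (lp (fun _ : ℕ => ℝ) ⊤), B.Nonempty → IsClosed B → IsBounded B →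
      (cheb (czero ∩ closedBall 0 1) B).Nonempty ∧
      ∀ ε > (0 : ℝ), ∃ δ > (0 : ℝ),
        ∀ f ∈ czero ∩ closedBall 0 1,
          farr f B ≤ rad (czero ∩ closedBall 0 1) B + δ →
            ∃ g ∈ cheb (czero ∩ closedBall 0 1) B, ‖f - g‖ ≤ ε := by
  intro B hB _ hBd
  obtain ⟨M, hM'⟩ := (isBounded_iff_forall_norm_le).mp hBd
  have hM : ∀ b ∈ B, ‖b‖ ≤ M := hM'
  have hVeq : Stmt12Aux.Vc = czero ∩ closedBall 0 1 := rfl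
  constructor
  · have hlt : rad Stmt12Aux.Vc B < rad Stmt12Aux.Vc B + 1 := lt_add_one _
    obtain ⟨v, hv⟩ := exists_lt_of_ciInf_lt hlt
    obtain ⟨g, hg, -⟩ := Stmt12Aux.key hB hM (v : _) v.2 one_pos hv.le
    rw [← hVeq]
    exact ⟨g, hg⟩
  · intro ε hε
    refine ⟨ε, hε, fun f hf hfr => ?_⟩
    rw [← hVeq] at hf hfr ⊢
    exact Stmt12Aux.key hB hM f hf hε hfr
end

section
/- Let X be a Banach space, Y a closed subspace which is an M-summand in X (so X = Y ⊕_∞ W for some closed subspace W), and Z a closed subspace of Y. For any nonempty closed bounded B ⊆ X write B(1) = {y ∈ Y : ∃ w ∈ W, y + w ∈ B} and B(2) = {w ∈ W : ∃ y ∈ Y, y + w ∈ B}. Then rad_Z(B) = max{rad_Z(B(1)), sup_{w∈B(2)} ‖w‖}. -/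
open Metric Set Bornology Pointwise

theorem stmt13 {X : Type*} [NormedAddCommGroup X] [NormedSpace ℝ X] [CompleteSpace X]
    (Y W Z : Subspace ℝ X)
    (hYc : IsClosed (Y : Set X)) (hWc : IsClosed (W : Set X))
    (hsum : ∀ x : X, ∃ y ∈ Y, ∃ w ∈ W, x = y + w)
    (hnorm : ∀ y ∈ Y, ∀ w ∈ W, ‖y + w‖ = max ‖y‖ ‖w‖)
    (hZY : Z ≤ Y) (hZc : IsClosed (Z : Set X))
    (B : Set X) (hBne : B.Nonempty) (hBc : IsClosed B) (hBb : IsBounded B) :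
    rad (Z : Set X) B =
      max (rad (Z : Set X) {y | y ∈ Y ∧ ∃ w ∈ W, y + w ∈ B})
        (⨆ w : {w | w ∈ W ∧ ∃ y ∈ Y, y + w ∈ B}, ‖(w : X)‖) := by
  classical
  set B1 : Set X := {y | y ∈ Y ∧ ∃ w ∈ W, y + w ∈ B} with hB1def
  set B2 : Set X := {w | w ∈ W ∧ ∃ y ∈ Y, y + w ∈ B} with hB2def
  obtain ⟨M, hM⟩ := isBounded_iff_forall_norm_le.mp hBb
  have hY1 : ∀ y ∈ B1, ‖y‖ ≤ M := by
    rintro y ⟨hy, w, hw, hb⟩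
    calc ‖y‖ ≤ max ‖y‖ ‖w‖ := le_max_left _ _
    _ = ‖y + w‖ := (hnorm y hy w hw).symm
    _ ≤ M := hM _ hb
  have hW2 : ∀ w ∈ B2, ‖w‖ ≤ M := by
    rintro w ⟨hw, y, hy, hb⟩
    calc ‖w‖ ≤ max ‖y‖ ‖w‖ := le_max_right _ _
    _ = ‖y + w‖ := (hnorm y hy w hw).symm
    _ ≤ M := hM _ hb
  obtain ⟨b0, hb0⟩ := hBne
  obtain ⟨y0, hy0, w0, hw0, hb0eq⟩ := hsum b0
  have hy0B1 : y0 ∈ B1 := ⟨hy0, w0, hw0, hb0eq ▸ hb0⟩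
  have hw0B2 : w0 ∈ B2 := ⟨hw0, y0, hy0, hb0eq ▸ hb0⟩
  haveI : Nonempty B := ⟨⟨b0, hb0⟩⟩
  haveI : Nonempty B1 := ⟨⟨y0, hy0B1⟩⟩
  haveI : Nonempty B2 := ⟨⟨w0, hw0B2⟩⟩
  haveI : Nonempty (Z : Set X) := ⟨⟨0, Z.zero_mem⟩⟩
  set c : ℝ := ⨆ w : B2, ‖(w : X)‖ with hcdef
  have hbddB2 : BddAbove (Set.range fun w : B2 => ‖(w : X)‖) := by
    refine ⟨M, ?_⟩; rintro _ ⟨w, rfl⟩; exact hW2 w w.2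
  -- key pointwise identity
  have key : ∀ z : X, z ∈ Z → farr z B = max (farr z B1) c := by
    intro z hz
    have hzY : z ∈ Y := hZY hz
    have hbddB : BddAbove (Set.range fun b : B => ‖z - (b : X)‖) := by
      refine ⟨‖z‖ + M, ?_⟩
      rintro _ ⟨b, rfl⟩
      calc ‖z - (b : X)‖ ≤ ‖z‖ + ‖(b : X)‖ := norm_sub_le _ _
      _ ≤ ‖z‖ + M := by linarith [hM _ b.2]
    have hbddB1 : BddAbove (Set.range fun y : B1 => ‖z - (y : X)‖) := by
      refine ⟨‖z‖ + M, ?_⟩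
      rintro _ ⟨y, rfl⟩
      calc ‖z - (y : X)‖ ≤ ‖z‖ + ‖(y : X)‖ := norm_sub_le _ _
      _ ≤ ‖z‖ + M := by linarith [hY1 _ y.2]
    have hdec : ∀ y ∈ Y, ∀ w ∈ W, ‖z - (y + w)‖ = max ‖z - y‖ ‖w‖ := by
      intro y hy w hw
      have h := hnorm (z - y) (Y.sub_mem hzY hy) (-w) (W.neg_mem hw)
      rw [norm_neg] at h
      rw [show z - (y + w) = (z - y) + (-w) by abel]
      exact h
    apply le_antisymm
    · apply ciSup_le
      intro b
      obtain ⟨y, hy, w, hw, hb⟩ := hsum (b : X)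
      have hy1 : y ∈ B1 := ⟨hy, w, hw, hb ▸ b.2⟩
      have hw2 : w ∈ B2 := ⟨hw, y, hy, hb ▸ b.2⟩
      rw [show (b : X) = y + w from hb, hdec y hy w hw]
      exact max_le_max (le_ciSup hbddB1 ⟨y, hy1⟩) (le_ciSup hbddB2 ⟨w, hw2⟩)
    · apply max_le
      · apply ciSup_le
        rintro ⟨y, hy, w, hw, hb⟩
        have h1 : ‖z - y‖ ≤ ‖z - (y + w)‖ := by
          rw [hdec y hy w hw]; exact le_max_left _ _
        exact h1.trans (le_ciSup hbddB ⟨y + w, hb⟩)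
      · apply ciSup_le
        rintro ⟨w, hw, y, hy, hb⟩
        have h1 : ‖w‖ ≤ ‖z - (y + w)‖ := by
          rw [hdec y hy w hw]; exact le_max_right _ _
        exact h1.trans (le_ciSup hbddB ⟨y + w, hb⟩)
  unfold rad
  have hcong : (⨅ z : (Z : Set X), farr (z : X) B)
      = ⨅ z : (Z : Set X), max (farr (z : X) B1) c :=
    iInf_congr fun z => key (z : X) z.2
  rw [hcong]
  -- now prove ⨅ z, max (f z) c = max (⨅ z, f z) c
  have hf0 : ∀ z : (Z : Set X), 0 ≤ farr (z : X) B1 :=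
    fun z => Real.iSup_nonneg fun y => norm_nonneg _
  have bddf : BddBelow (Set.range fun z : (Z : Set X) => farr (z : X) B1) := by
    refine ⟨0, ?_⟩; rintro _ ⟨z, rfl⟩; exact hf0 z
  have bddmax : BddBelow (Set.range fun z : (Z : Set X) => max (farr (z : X) B1) c) := by
    refine ⟨0, ?_⟩; rintro _ ⟨z, rfl⟩; exact le_trans (hf0 z) (le_max_left _ _)
  apply le_antisymm
  · apply le_of_forall_pos_le_add
    intro ε hε
    obtain ⟨z, hzlt⟩ := exists_lt_of_ciInf_lt
      (lt_add_of_pos_right (⨅ z : (Z : Set X), farr (z : X) B1) hε)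
    calc (⨅ z : (Z : Set X), max (farr (z : X) B1) c)
        ≤ max (farr (z : X) B1) c := ciInf_le bddmax z
    _ ≤ max ((⨅ z : (Z : Set X), farr (z : X) B1) + ε) c := max_le_max hzlt.le le_rfl
    _ ≤ max (⨅ z : (Z : Set X), farr (z : X) B1) c + ε := by
        apply max_le
        · linarith [le_max_left (⨅ z : (Z : Set X), farr (z : X) B1) c]
        · linarith [le_max_right (⨅ z : (Z : Set X), farr (z : X) B1) c]
  · exact le_ciInf fun z => max_le_max (ciInf_le bddf z) le_rfl
end

section
/- Let X₁, X₂ be Banach spaces, V₁ ⊆ X₁, V₂ ⊆ X₂ nonempty closed convex sets such that (V_i, CB(X_i)) has the restricted center property for i = 1,2. Let X = X₁ ⊕_∞ X₂ and V = V₁ × V₂. If for each i the map cent_{V_i}(·) is lower Hausdorff semi-continuous on CB(X_i) (with Hausdorff metric on the domain), then cent_V(·) is lower Hausdorff semi-continuous on CB(X). -/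
open Metric Set Bornology Pointwise

/-- The restricted Chebyshev-center map of `V` is lower Hausdorff semi-continuous on the
class of nonempty closed bounded subsets, with the Hausdorff metric on the domain. -/
noncomputable def lowerHSC {X : Type*} [NormedAddCommGroup X] (V : Set X) : Prop :=
  ∀ B : Set X, B.Nonempty → IsClosed B → IsBounded B →
    ∀ ε > (0 : ℝ), ∃ δ > (0 : ℝ), ∀ A : Set X, A.Nonempty → IsClosed A → IsBounded A →
      hausdorffDist B A < δ → ∀ z ∈ cheb V B, ∃ w ∈ cheb V A, ‖z - w‖ < ε

section basic
variable {X : Type*} [NormedAddCommGroup X] {v z c : X} {V B A : Set X}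

lemma farr_bdd (v : X) (hBb : IsBounded B) :
    BddAbove (Set.range fun b : B => ‖v - (b : X)‖) := by
  obtain ⟨r, hr⟩ := hBb.subset_closedBall 0
  refine ⟨‖v‖ + r, ?_⟩
  rintro x ⟨b, rfl⟩
  have hb := hr b.2
  simp only [mem_closedBall, dist_zero_right] at hb
  calc ‖v - (b : X)‖ ≤ ‖v‖ + ‖(b : X)‖ := norm_sub_le _ _
  _ ≤ ‖v‖ + r := by linarith

lemma farr_le_s15 {r : ℝ} (hB : B.Nonempty) (h : ∀ b ∈ B, ‖v - b‖ ≤ r) : farr v B ≤ r := by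
  have : Nonempty B := hB.to_subtype
  exact ciSup_le fun b => h b b.2

lemma le_farr_s15 (hBb : IsBounded B) {b : X} (hb : b ∈ B) : ‖v - b‖ ≤ farr v B :=
  le_ciSup (farr_bdd v hBb) ⟨b, hb⟩

lemma farr_nonneg_s15 (hBne : B.Nonempty) (hBb : IsBounded B) : 0 ≤ farr v B := by
  obtain ⟨b, hb⟩ := hBne
  exact le_trans (norm_nonneg _) (le_farr_s15 hBb hb)

lemma farr_closure (hBne : B.Nonempty) (hBb : IsBounded B) :
    farr v (closure B) = farr v B := by
  refine le_antisymm (farr_le_s15 (hBne.closure) fun b hb => ?_)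
    (farr_le_s15 hBne fun b hb => le_farr_s15 hBb.closure (subset_closure hb))
  have : B ⊆ {x | ‖v - x‖ ≤ farr v B} := fun x hx => le_farr_s15 hBb hx
  have hc : IsClosed {x : X | ‖v - x‖ ≤ farr v B} :=
    isClosed_le (by fun_prop) continuous_const
  exact (closure_minimal this hc) hb

/-- moving to a Hausdorff-close set changes `farr` little -/
lemma farr_mono_haus {δ : ℝ} (hBne : B.Nonempty) (hBb : IsBounded B)
    (hAne : A.Nonempty) (hAb : IsBounded A) (hd : hausdorffDist B A < δ) :
    farr v A ≤ farr v B + δ := by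
  refine farr_le_s15 hAne fun a ha => ?_
  have fin : EMetric.hausdorffEdist A B ≠ ⊤ :=
    hausdorffEdist_ne_top_of_nonempty_of_bounded hAne hBne hAb hBb
  have : hausdorffDist A B < δ := by rwa [hausdorffDist_comm]
  obtain ⟨b, hb, hab⟩ := exists_dist_lt_of_hausdorffDist_lt ha this fin
  calc ‖v - a‖ ≤ ‖v - b‖ + ‖b - a‖ := by
        have : v - a = (v - b) + (b - a) := by abel
        rw [this]; exact norm_add_le _ _
  _ ≤ farr v B + δ := by
        have : ‖b - a‖ < δ := by rwa [← dist_eq_norm, dist_comm]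
        have h2 := le_farr_s15 (v := v) hBb hb
        linarith

lemma rad_le_farr (hBne : B.Nonempty) (hBb : IsBounded B) (hv : v ∈ V) :
    rad V B ≤ farr v B := by
  show (⨅ w : V, farr (w : X) B) ≤ farr v B
  have hbdd : BddBelow (Set.range fun w : V => farr (w : X) B) := by
    refine ⟨0, ?_⟩
    rintro x ⟨w, rfl⟩
    exact farr_nonneg_s15 hBne hBb
  exact ciInf_le hbdd ⟨v, hv⟩

lemma rad_nonneg (hBne : B.Nonempty) (hBb : IsBounded B) : 0 ≤ rad V B :=
  Real.iInf_nonneg fun v => farr_nonneg_s15 hBne hBb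

lemma rad_mono_haus {δ : ℝ} (hVne : V.Nonempty) (hBne : B.Nonempty) (hBb : IsBounded B)
    (hAne : A.Nonempty) (hAb : IsBounded A) (hd : hausdorffDist B A < δ) :
    rad V A ≤ rad V B + δ := by
  have : Nonempty V := hVne.to_subtype
  have h : ∀ w : V, rad V A - δ ≤ farr (w : X) B := fun w => by
    have := farr_mono_haus (v := (w : X)) hBne hBb hAne hAb hd
    have h2 := rad_le_farr (V := V) hAne hAb w.2
    linarith
  have h2 := le_ciInf h
  show rad V A ≤ (⨅ w : V, farr (w : X) B) + δ
  linarith [h2]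

lemma farr_combo {Y : Type*} [NormedAddCommGroup Y] [NormedSpace ℝ Y] {z c : Y} {A : Set Y}
    (hAne : A.Nonempty) (hAb : IsBounded A) {t : ℝ} (ht0 : 0 ≤ t) (ht1 : t ≤ 1) :
    farr ((1 - t) • z + t • c) A ≤ (1 - t) * farr z A + t * farr c A := by
  refine farr_le_s15 hAne fun a ha => ?_
  have key : (1 - t) • z + t • c - a = (1 - t) • (z - a) + t • (c - a) := by
    simp [smul_sub]; module
  rw [key]
  calc ‖(1 - t) • (z - a) + t • (c - a)‖ ≤ ‖(1 - t) • (z - a)‖ + ‖t • (c - a)‖ :=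
        norm_add_le _ _
  _ = (1 - t) * ‖z - a‖ + t * ‖c - a‖ := by
        rw [norm_smul, norm_smul, Real.norm_of_nonneg (by linarith), Real.norm_of_nonneg ht0]
  _ ≤ (1 - t) * farr z A + t * farr c A := by
        have h1 := le_farr_s15 (v := z) hAb ha
        have h2 := le_farr_s15 (v := c) hAb ha
        nlinarith

end basic

section closure
variable {X : Type*} [NormedAddCommGroup X] {V B : Set X}

lemma rad_closure (hBne : B.Nonempty) (hBb : IsBounded B) :
    rad V (closure B) = rad V B := by
  unfold rad
  exact iInf_congr fun v => farr_closure hBne hBb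

end closure

section prodlem
variable {X₁ X₂ : Type*} [NormedAddCommGroup X₁] [NormedAddCommGroup X₂]
variable {B A : Set (X₁ × X₂)} {V₁ : Set X₁} {V₂ : Set X₂}

lemma isBounded_fst (hBb : IsBounded B) : IsBounded (Prod.fst '' B) := by
  obtain ⟨r, hr⟩ := hBb.subset_closedBall 0
  refine (isBounded_closedBall (x := (0 : X₁)) (r := r)).subset ?_
  rintro _ ⟨b, hb, rfl⟩
  have := hr hb
  simp only [mem_closedBall, dist_zero_right] at this ⊢
  exact le_trans (norm_fst_le b) this

lemma isBounded_snd (hBb : IsBounded B) : IsBounded (Prod.snd '' B) := by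
  obtain ⟨r, hr⟩ := hBb.subset_closedBall 0
  refine (isBounded_closedBall (x := (0 : X₂)) (r := r)).subset ?_
  rintro _ ⟨b, hb, rfl⟩
  have := hr hb
  simp only [mem_closedBall, dist_zero_right] at this ⊢
  exact le_trans (norm_snd_le b) this

lemma farr_prod (v : X₁ × X₂) (hBne : B.Nonempty) (hBb : IsBounded B) :
    farr v B = max (farr v.1 (Prod.fst '' B)) (farr v.2 (Prod.snd '' B)) := by
  refine le_antisymm (farr_le_s15 hBne fun b hb => ?_) (max_le (farr_le_s15 (hBne.image _) ?_)
    (farr_le_s15 (hBne.image _) ?_))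
  · have h1 : ‖v.1 - b.1‖ ≤ farr v.1 (Prod.fst '' B) :=
      le_farr_s15 (isBounded_fst hBb) ⟨b, hb, rfl⟩
    have h2 : ‖v.2 - b.2‖ ≤ farr v.2 (Prod.snd '' B) :=
      le_farr_s15 (isBounded_snd hBb) ⟨b, hb, rfl⟩
    rw [Prod.norm_def]
    exact max_le_max h1 h2
  · rintro _ ⟨b, hb, rfl⟩
    exact le_trans (norm_fst_le (v - b)) (le_farr_s15 hBb hb)
  · rintro _ ⟨b, hb, rfl⟩
    exact le_trans (norm_snd_le (v - b)) (le_farr_s15 hBb hb)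

lemma rad_prod (hV₁ne : V₁.Nonempty) (hV₂ne : V₂.Nonempty)
    (hBne : B.Nonempty) (hBb : IsBounded B) :
    rad (V₁ ×ˢ V₂) B = max (rad V₁ (Prod.fst '' B)) (rad V₂ (Prod.snd '' B)) := by
  have : Nonempty V₁ := hV₁ne.to_subtype
  have : Nonempty V₂ := hV₂ne.to_subtype
  have hne : (V₁ ×ˢ V₂).Nonempty := hV₁ne.prod hV₂ne
  refine le_antisymm (le_of_forall_pos_le_add fun η hη => ?_) ?_
  · have h1 : rad V₁ (Prod.fst '' B) < rad V₁ (Prod.fst '' B) + η := by linarith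
    have h2 : rad V₂ (Prod.snd '' B) < rad V₂ (Prod.snd '' B) + η := by linarith
    obtain ⟨v₁, hv₁⟩ := exists_lt_of_ciInf_lt h1
    obtain ⟨v₂, hv₂⟩ := exists_lt_of_ciInf_lt h2
    have hmem : ((v₁ : X₁), (v₂ : X₂)) ∈ V₁ ×ˢ V₂ := ⟨v₁.2, v₂.2⟩
    have := rad_le_farr (V := V₁ ×ˢ V₂) hBne hBb hmem
    rw [farr_prod _ hBne hBb] at this
    refine le_trans this ?_
    exact max_le (by simp only []; nlinarith [le_max_left (rad V₁ (Prod.fst '' B)) (rad V₂ (Prod.snd '' B))])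
      (by nlinarith [le_max_right (rad V₁ (Prod.fst '' B)) (rad V₂ (Prod.snd '' B))])
  · have : Nonempty (V₁ ×ˢ V₂ : Set (X₁ × X₂)) := hne.to_subtype
    refine le_ciInf fun w => ?_
    rw [farr_prod _ hBne hBb]
    exact max_le_max (rad_le_farr (hBne.image _) (isBounded_fst hBb) w.2.1)
      (rad_le_farr (hBne.image _) (isBounded_snd hBb) w.2.2)

lemma haus_fst {δ : ℝ} (hBne : B.Nonempty) (hBb : IsBounded B)
    (hAne : A.Nonempty) (hAb : IsBounded A) (hd : hausdorffDist B A < δ) :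
    hausdorffDist (Prod.fst '' B) (Prod.fst '' A) < δ := by
  set d := hausdorffDist B A with hdd
  have hd0 : 0 ≤ d := hausdorffDist_nonneg
  have fin : EMetric.hausdorffEdist B A ≠ ⊤ :=
    hausdorffEdist_ne_top_of_nonempty_of_bounded hBne hAne hBb hAb
  have fin' : EMetric.hausdorffEdist A B ≠ ⊤ := by
    exact EMetric.hausdorffEdist_comm.trans_ne fin
  have key : hausdorffDist (Prod.fst '' B) (Prod.fst '' A) ≤ (d + δ)/2 := by
    refine hausdorffDist_le_of_mem_dist (by linarith) ?_ ?_
    · rintro _ ⟨b, hb, rfl⟩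
      obtain ⟨a, ha, hba⟩ := exists_dist_lt_of_hausdorffDist_lt hb (by linarith : d < (d+δ)/2) fin
      refine ⟨a.1, ⟨a, ha, rfl⟩, ?_⟩
      have : dist b.1 a.1 ≤ dist b a := by
        rw [Prod.dist_eq]; exact le_max_left _ _
      linarith
    · rintro _ ⟨a, ha, rfl⟩
      have hd' : hausdorffDist A B < (d+δ)/2 := by rw [hausdorffDist_comm]; linarith
      obtain ⟨b, hb, hab⟩ := exists_dist_lt_of_hausdorffDist_lt ha hd' fin'
      refine ⟨b.1, ⟨b, hb, rfl⟩, ?_⟩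
      have h2 : dist a.1 b.1 ≤ dist a b := by
        rw [Prod.dist_eq]; exact le_max_left _ _
      have h3 : dist b.1 a.1 = dist a.1 b.1 := dist_comm _ _
      linarith
  linarith

lemma haus_snd {δ : ℝ} (hBne : B.Nonempty) (hBb : IsBounded B)
    (hAne : A.Nonempty) (hAb : IsBounded A) (hd : hausdorffDist B A < δ) :
    hausdorffDist (Prod.snd '' B) (Prod.snd '' A) < δ := by
  set d := hausdorffDist B A with hdd
  have hd0 : 0 ≤ d := hausdorffDist_nonneg
  have fin : EMetric.hausdorffEdist B A ≠ ⊤ :=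
    hausdorffEdist_ne_top_of_nonempty_of_bounded hBne hAne hBb hAb
  have fin' : EMetric.hausdorffEdist A B ≠ ⊤ := by
    exact EMetric.hausdorffEdist_comm.trans_ne fin
  have key : hausdorffDist (Prod.snd '' B) (Prod.snd '' A) ≤ (d + δ)/2 := by
    refine hausdorffDist_le_of_mem_dist (by linarith) ?_ ?_
    · rintro _ ⟨b, hb, rfl⟩
      obtain ⟨a, ha, hba⟩ := exists_dist_lt_of_hausdorffDist_lt hb (by linarith : d < (d+δ)/2) fin
      refine ⟨a.2, ⟨a, ha, rfl⟩, ?_⟩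
      have : dist b.2 a.2 ≤ dist b a := by
        rw [Prod.dist_eq]; exact le_max_right _ _
      linarith
    · rintro _ ⟨a, ha, rfl⟩
      have hd' : hausdorffDist A B < (d+δ)/2 := by rw [hausdorffDist_comm]; linarith
      obtain ⟨b, hb, hab⟩ := exists_dist_lt_of_hausdorffDist_lt ha hd' fin'
      refine ⟨b.2, ⟨b, hb, rfl⟩, ?_⟩
      have h2 : dist a.2 b.2 ≤ dist a b := by
        rw [Prod.dist_eq]; exact le_max_right _ _
      have h3 : dist b.2 a.2 = dist a.2 b.2 := dist_comm _ _
      linarith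
  linarith

end prodlem

lemma coord {X : Type*} [NormedAddCommGroup X] [NormedSpace ℝ X]
    {V : Set X} (hVne : V.Nonempty) (hVconv : Convex ℝ V)
    (hrcp : ∀ B : Set X, B.Nonempty → IsClosed B → IsBounded B → (cheb V B).Nonempty)
    (h : lowerHSC V) (B : Set X) (hBne : B.Nonempty) (hBc : IsClosed B) (hBb : IsBounded B)
    (R : ℝ) (hR : rad V B ≤ R) {ε : ℝ} (hε : 0 < ε) :
    ∃ δ > (0:ℝ), ∀ A : Set X, A.Nonempty → IsClosed A → IsBounded A →
      hausdorffDist B A < δ → ∀ R', rad V A ≤ R' → |R' - R| ≤ δ →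
      ∀ z ∈ V, farr z B ≤ R → ∃ w ∈ V, farr w A ≤ R' ∧ ‖z - w‖ < ε := by
  rcases eq_or_lt_of_le hR with heq | hlt
  · -- R = rad V B : every admissible z is a Chebyshev center, use lower semicontinuity
    obtain ⟨δ, hδ, hδ'⟩ := h B hBne hBc hBb ε hε
    refine ⟨δ, hδ, fun A hAne hAc hAb hd R' hR' _ z hzV hz => ?_⟩
    have hzc : z ∈ cheb V B := by
      refine ⟨hzV, le_antisymm ?_ (rad_le_farr hBne hBb hzV)⟩
      rw [← heq] at hz; exact hz
    obtain ⟨w, hw, hwz⟩ := hδ' A hAne hAc hAb hd z hzc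
    exact ⟨w, hw.1, by rw [hw.2]; exact hR', hwz⟩
  · -- rad V B < R : perturb towards a Chebyshev center of A
    set g := R - rad V B with hg
    have hgpos : 0 < g := by rw [hg]; linarith
    have hR0 : 0 ≤ R := le_trans (rad_nonneg hBne hBb) hR
    set δ := min 1 (min (g/2) (ε * g / (16 * (R + 1)))) with hδdef
    have hδpos : 0 < δ := lt_min one_pos (lt_min (by positivity) (by positivity))
    have hδ1 : δ ≤ 1 := min_le_left _ _
    have hδg : δ ≤ g/2 := le_trans (min_le_right _ _) (min_le_left _ _)
    have hδε : δ ≤ ε * g / (16 * (R + 1)) := le_trans (min_le_right _ _) (min_le_right _ _)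
    refine ⟨δ, hδpos, fun A hAne hAc hAb hd R' hR' hRR z hzV hz => ?_⟩
    obtain ⟨c, hcV, hcA⟩ := hrcp A hAne hAc hAb
    obtain ⟨hRu, hRl⟩ := abs_le.mp hRR
    set t := 2 * δ / g with htdef
    have ht0 : 0 < t := by positivity
    have ht1 : t ≤ 1 := by rw [htdef, div_le_one hgpos]; linarith
    have hwV : (1 - t) • z + t • c ∈ V :=
      hVconv hzV hcV (by linarith) (le_of_lt ht0) (by ring)
    have hradA : rad V A ≤ rad V B + δ := rad_mono_haus hVne hBne hBb hAne hAb hd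
    have hfzA : farr z A ≤ R' + 2 * δ := by
      have := farr_mono_haus (v := z) hBne hBb hAne hAb hd
      linarith
    have hfcA : farr c A ≤ R' + 2 * δ - g := by
      rw [hcA]; linarith
    have htg : t * g = 2 * δ := by
      rw [htdef]; exact div_mul_cancel₀ _ (ne_of_gt hgpos)
    have hw : farr ((1 - t) • z + t • c) A ≤ R' := by
      have hcombo := farr_combo (z := z) (c := c) hAne hAb (le_of_lt ht0) ht1
      nlinarith [hcombo, hfzA, hfcA, ht0, ht1, htg]
    have hzc : ‖z - c‖ ≤ 2 * R + 6 := by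
      obtain ⟨a, ha⟩ := hAne
      have h1 := le_farr_s15 (v := z) hAb ha
      have h2 := le_farr_s15 (v := c) hAb ha
      have h3 : ‖z - c‖ ≤ ‖z - a‖ + ‖c - a‖ := by
        have : z - c = (z - a) - (c - a) := by abel
        rw [this]; exact norm_sub_le _ _
      have h4 : rad V A ≤ R' := hR'
      rw [hcA] at h2
      linarith
    have hnorm : ‖z - ((1 - t) • z + t • c)‖ < ε := by
      have hkey : z - ((1 - t) • z + t • c) = t • (z - c) := by
        module
      rw [hkey, norm_smul, Real.norm_of_nonneg (le_of_lt ht0)]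
      have ht : t ≤ ε / (8 * (R + 1)) := by
        have h16 : δ * (16 * (R + 1)) ≤ ε * g :=
          (le_div_iff₀ (by positivity)).mp hδε
        rw [htdef, div_le_div_iff₀ hgpos (by positivity)]
        nlinarith [h16]
      have h8 : (0:ℝ) < 8 * (R + 1) := by positivity
      have hkey2 : ε / (8 * (R + 1)) * (2 * R + 6) < ε := by
        rw [div_mul_eq_mul_div, div_lt_iff₀ h8]
        nlinarith
      calc t * ‖z - c‖ ≤ t * (2 * R + 6) :=
            mul_le_mul_of_nonneg_left hzc (le_of_lt ht0)
      _ ≤ ε / (8 * (R + 1)) * (2 * R + 6) :=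
            mul_le_mul_of_nonneg_right ht (by linarith)
      _ < ε := hkey2
    exact ⟨_, hwV, hw, hnorm⟩

theorem stmt15 {X₁ X₂ : Type*} [NormedAddCommGroup X₁] [NormedSpace ℝ X₁] [CompleteSpace X₁]
    [NormedAddCommGroup X₂] [NormedSpace ℝ X₂] [CompleteSpace X₂]
    (V₁ : Set X₁) (V₂ : Set X₂)
    (hV₁ne : V₁.Nonempty) (hV₁c : IsClosed V₁) (hV₁conv : Convex ℝ V₁)
    (hV₂ne : V₂.Nonempty) (hV₂c : IsClosed V₂) (hV₂conv : Convex ℝ V₂)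
    (hrcp₁ : ∀ B₁ : Set X₁, B₁.Nonempty → IsClosed B₁ → IsBounded B₁ → (cheb V₁ B₁).Nonempty)
    (hrcp₂ : ∀ B₂ : Set X₂, B₂.Nonempty → IsClosed B₂ → IsBounded B₂ → (cheb V₂ B₂).Nonempty)
    (h₁ : lowerHSC V₁) (h₂ : lowerHSC V₂) :
    lowerHSC (V₁ ×ˢ V₂) := by
  intro B hBne hBc hBb ε hε
  set B₁ := closure (Prod.fst '' B) with hB₁def
  set B₂ := closure (Prod.snd '' B) with hB₂def
  have him1ne : (Prod.fst '' B).Nonempty := hBne.image _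
  have him2ne : (Prod.snd '' B).Nonempty := hBne.image _
  have him1b : IsBounded (Prod.fst '' B) := isBounded_fst hBb
  have him2b : IsBounded (Prod.snd '' B) := isBounded_snd hBb
  have hB₁ne : B₁.Nonempty := him1ne.closure
  have hB₂ne : B₂.Nonempty := him2ne.closure
  have hB₁c : IsClosed B₁ := isClosed_closure
  have hB₂c : IsClosed B₂ := isClosed_closure
  have hB₁b : IsBounded B₁ := him1b.closure
  have hB₂b : IsBounded B₂ := him2b.closure
  have hf1 : ∀ v : X₁, farr v B₁ = farr v (Prod.fst '' B) := fun v =>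
    farr_closure him1ne him1b
  have hf2 : ∀ v : X₂, farr v B₂ = farr v (Prod.snd '' B) := fun v =>
    farr_closure him2ne him2b
  have hr1 : rad V₁ B₁ = rad V₁ (Prod.fst '' B) := rad_closure him1ne him1b
  have hr2 : rad V₂ B₂ = rad V₂ (Prod.snd '' B) := rad_closure him2ne him2b
  set R := rad (V₁ ×ˢ V₂) B with hRdef
  have hRmax : R = max (rad V₁ B₁) (rad V₂ B₂) := by
    rw [hRdef, rad_prod hV₁ne hV₂ne hBne hBb, hr1, hr2]
  obtain ⟨δ₁, hδ₁, H₁⟩ := coord hV₁ne hV₁conv hrcp₁ h₁ B₁ hB₁ne hB₁c hB₁b R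
    (hRmax ▸ le_max_left _ _) hε
  obtain ⟨δ₂, hδ₂, H₂⟩ := coord hV₂ne hV₂conv hrcp₂ h₂ B₂ hB₂ne hB₂c hB₂b R
    (hRmax ▸ le_max_right _ _) hε
  refine ⟨min δ₁ δ₂, lt_min hδ₁ hδ₂, ?_⟩
  intro A hAne hAc hAb hd z hzc
  set A₁ := closure (Prod.fst '' A) with hA₁def
  set A₂ := closure (Prod.snd '' A) with hA₂def
  have gim1ne : (Prod.fst '' A).Nonempty := hAne.image _
  have gim2ne : (Prod.snd '' A).Nonempty := hAne.image _
  have gim1b : IsBounded (Prod.fst '' A) := isBounded_fst hAb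
  have gim2b : IsBounded (Prod.snd '' A) := isBounded_snd hAb
  have hA₁ne : A₁.Nonempty := gim1ne.closure
  have hA₂ne : A₂.Nonempty := gim2ne.closure
  have hA₁c : IsClosed A₁ := isClosed_closure
  have hA₂c : IsClosed A₂ := isClosed_closure
  have hA₁b : IsBounded A₁ := gim1b.closure
  have hA₂b : IsBounded A₂ := gim2b.closure
  have hg1 : ∀ v : X₁, farr v A₁ = farr v (Prod.fst '' A) := fun v =>
    farr_closure gim1ne gim1b
  have hg2 : ∀ v : X₂, farr v A₂ = farr v (Prod.snd '' A) := fun v =>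
    farr_closure gim2ne gim2b
  have hs1 : rad V₁ A₁ = rad V₁ (Prod.fst '' A) := rad_closure gim1ne gim1b
  have hs2 : rad V₂ A₂ = rad V₂ (Prod.snd '' A) := rad_closure gim2ne gim2b
  have hd1' : hausdorffDist B₁ A₁ < min δ₁ δ₂ := by
    rw [hB₁def, hA₁def, hausdorffDist_closure]
    exact haus_fst hBne hBb hAne hAb hd
  have hd2' : hausdorffDist B₂ A₂ < min δ₁ δ₂ := by
    rw [hB₂def, hA₂def, hausdorffDist_closure]
    exact haus_snd hBne hBb hAne hAb hd
  have hd1 : hausdorffDist B₁ A₁ < δ₁ := lt_of_lt_of_le hd1' (min_le_left _ _)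
  have hd2 : hausdorffDist B₂ A₂ < δ₂ := lt_of_lt_of_le hd2' (min_le_right _ _)
  set R' := rad (V₁ ×ˢ V₂) A with hR'def
  have hR'max : R' = max (rad V₁ A₁) (rad V₂ A₂) := by
    rw [hR'def, rad_prod hV₁ne hV₂ne hAne hAb, hs1, hs2]
  -- |R' - R| ≤ min δ₁ δ₂
  have h1a : rad V₁ A₁ ≤ rad V₁ B₁ + min δ₁ δ₂ :=
    rad_mono_haus hV₁ne hB₁ne hB₁b hA₁ne hA₁b hd1'
  have h2a : rad V₂ A₂ ≤ rad V₂ B₂ + min δ₁ δ₂ :=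
    rad_mono_haus hV₂ne hB₂ne hB₂b hA₂ne hA₂b hd2'
  have h1b : rad V₁ B₁ ≤ rad V₁ A₁ + min δ₁ δ₂ :=
    rad_mono_haus hV₁ne hA₁ne hA₁b hB₁ne hB₁b (by rwa [hausdorffDist_comm] at hd1')
  have h2b : rad V₂ B₂ ≤ rad V₂ A₂ + min δ₁ δ₂ :=
    rad_mono_haus hV₂ne hA₂ne hA₂b hB₂ne hB₂b (by rwa [hausdorffDist_comm] at hd2')
  have hup : R' ≤ R + min δ₁ δ₂ := by
    rw [hRmax, hR'max]
    exact max_le (le_trans h1a (add_le_add_left (le_max_left _ _) _))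
      (le_trans h2a (add_le_add_left (le_max_right _ _) _))
  have hlo : R ≤ R' + min δ₁ δ₂ := by
    rw [hRmax, hR'max]
    exact max_le (le_trans h1b (add_le_add_left (le_max_left _ _) _))
      (le_trans h2b (add_le_add_left (le_max_right _ _) _))
  have hRR1 : |R' - R| ≤ δ₁ := by
    rw [abs_le]
    have := min_le_left δ₁ δ₂
    constructor <;> linarith
  have hRR2 : |R' - R| ≤ δ₂ := by
    rw [abs_le]
    have := min_le_right δ₁ δ₂
    constructor <;> linarith
  obtain ⟨hzV, hzfarr⟩ := hzc
  have hzmax := farr_prod z hBne hBb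
  rw [hzfarr] at hzmax
  have hz1 : farr z.1 B₁ ≤ R := by
    rw [hf1]
    exact le_trans (le_max_left _ _) (le_of_eq hzmax.symm)
  have hz2 : farr z.2 B₂ ≤ R := by
    rw [hf2]
    exact le_trans (le_max_right _ _) (le_of_eq hzmax.symm)
  obtain ⟨w₁, hw₁V, hw₁A, hw₁z⟩ := H₁ A₁ hA₁ne hA₁c hA₁b hd1 R'
    (hR'max ▸ le_max_left _ _) hRR1 z.1 hzV.1 hz1
  obtain ⟨w₂, hw₂V, hw₂A, hw₂z⟩ := H₂ A₂ hA₂ne hA₂c hA₂b hd2 R'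
    (hR'max ▸ le_max_right _ _) hRR2 z.2 hzV.2 hz2
  refine ⟨(w₁, w₂), ⟨⟨hw₁V, hw₂V⟩, ?_⟩, ?_⟩
  · refine le_antisymm ?_ (rad_le_farr hAne hAb ⟨hw₁V, hw₂V⟩)
    rw [farr_prod _ hAne hAb]
    refine max_le ?_ ?_
    · rw [← hg1]; exact hw₁A
    · rw [← hg2]; exact hw₂A
  · rw [Prod.norm_def]
    exact max_lt hw₁z hw₂z
end

section
/- Let X be a Banach space, Y an M-summand in X with X = Y ⊕_∞ W, Z a closed subspace of Y, and B a nonempty closed bounded subset of X with projections B(1) ⊆ Y and B(2) ⊆ W. If sup_{w∈B(2)} ‖w‖ ≤ rad_Z(B(1)), then cent_Z(B) = cent_Z(B(1)), and more generally for each η > 0, cent_Z(B,η) = cent_Z(B(1),η). -/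
open Metric Set Bornology Pointwise

theorem stmt19 {X : Type*} [NormedAddCommGroup X] [NormedSpace ℝ X] [CompleteSpace X]
    (Y W Z : Subspace ℝ X)
    (hYc : IsClosed (Y : Set X)) (hWc : IsClosed (W : Set X))
    (hsum : ∀ x : X, ∃ y ∈ Y, ∃ w ∈ W, x = y + w)
    (hnorm : ∀ y ∈ Y, ∀ w ∈ W, ‖y + w‖ = max ‖y‖ ‖w‖)
    (hZY : Z ≤ Y) (hZc : IsClosed (Z : Set X))
    (B : Set X) (hBne : B.Nonempty) (hBc : IsClosed B) (hBb : IsBounded B)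
    (hle : (⨆ w : {w | w ∈ W ∧ ∃ y ∈ Y, y + w ∈ B}, ‖(w : X)‖) ≤
      rad (Z : Set X) {y | y ∈ Y ∧ ∃ w ∈ W, y + w ∈ B}) :
    cheb (Z : Set X) B = cheb (Z : Set X) {y | y ∈ Y ∧ ∃ w ∈ W, y + w ∈ B} ∧
      ∀ η > (0 : ℝ),
        {z ∈ (Z : Set X) | farr z B ≤ rad (Z : Set X) B + η} =
          {z ∈ (Z : Set X) |
            farr z {y | y ∈ Y ∧ ∃ w ∈ W, y + w ∈ B} ≤
              rad (Z : Set X) {y | y ∈ Y ∧ ∃ w ∈ W, y + w ∈ B} + η} := by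
  classical
  obtain ⟨R, hR⟩ := isBounded_iff_forall_norm_le.1 hBb
  set B1 : Set X := {y | y ∈ Y ∧ ∃ w ∈ W, y + w ∈ B} with hB1def
  set B2 : Set X := {w | w ∈ W ∧ ∃ y ∈ Y, y + w ∈ B} with hB2def
  obtain ⟨b0, hb0⟩ := hBne
  obtain ⟨y0, hy0, w0, hw0, hb0eq⟩ := hsum b0
  have hy0B1 : y0 ∈ B1 := ⟨hy0, w0, hw0, hb0eq ▸ hb0⟩
  have hw0B2 : w0 ∈ B2 := ⟨hw0, y0, hy0, hb0eq ▸ hb0⟩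
  haveI : Nonempty B1 := ⟨⟨y0, hy0B1⟩⟩
  haveI : Nonempty B2 := ⟨⟨w0, hw0B2⟩⟩
  haveI : Nonempty B := ⟨⟨b0, hb0⟩⟩
  haveI : Nonempty (Z : Set X) := ⟨⟨0, Z.zero_mem⟩⟩
  have hnormB1 : ∀ y ∈ B1, ‖y‖ ≤ R := by
    rintro y ⟨hy, w, hw, hyw⟩
    calc ‖y‖ ≤ max ‖y‖ ‖w‖ := le_max_left _ _
    _ = ‖y + w‖ := (hnorm y hy w hw).symm
    _ ≤ R := hR _ hyw
  have hnormB2 : ∀ w ∈ B2, ‖w‖ ≤ R := by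
    rintro w ⟨hw, y, hy, hyw⟩
    calc ‖w‖ ≤ max ‖y‖ ‖w‖ := le_max_right _ _
    _ = ‖y + w‖ := (hnorm y hy w hw).symm
    _ ≤ R := hR _ hyw
  have hbddB : ∀ z : X, BddAbove (Set.range fun b : B => ‖z - (b : X)‖) := by
    intro z
    refine ⟨‖z‖ + R, ?_⟩
    rintro _ ⟨b, rfl⟩
    exact (norm_sub_le _ _).trans (add_le_add_right (hR _ b.2) _)
  have hbddB1 : ∀ z : X, BddAbove (Set.range fun y : B1 => ‖z - (y : X)‖) := by
    intro z
    refine ⟨‖z‖ + R, ?_⟩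
    rintro _ ⟨y, rfl⟩
    exact (norm_sub_le _ _).trans (add_le_add_right (hnormB1 _ y.2) _)
  have hbddB2 : BddAbove (Set.range fun w : B2 => ‖(w : X)‖) := by
    refine ⟨R, ?_⟩
    rintro _ ⟨w, rfl⟩
    exact hnormB2 _ w.2
  have hfarrB1nonneg : ∀ z : X, 0 ≤ farr z B1 :=
    fun z => Real.iSup_nonneg fun _ => norm_nonneg _
  have hradle : ∀ z ∈ (Z : Set X), rad (Z : Set X) B1 ≤ farr z B1 := by
    intro z hz
    have hbdd : BddBelow (Set.range fun v : (Z : Set X) => farr (v : X) B1) :=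
      ⟨0, by rintro _ ⟨v, rfl⟩; exact hfarrB1nonneg _⟩
    exact ciInf_le hbdd ⟨z, hz⟩
  have hkey : ∀ y ∈ Y, ∀ w ∈ W, ∀ z ∈ Y, ‖z - (y + w)‖ = max ‖z - y‖ ‖w‖ := by
    intro y hy w hw z hzY
    have h : z - (y + w) = (z - y) + (-w) := by abel
    rw [h, hnorm _ (sub_mem hzY hy) _ (neg_mem hw), norm_neg]
  have hfarr : ∀ z ∈ (Z : Set X), farr z B = farr z B1 := by
    intro z hz
    have hzY : z ∈ Y := hZY hz
    apply le_antisymm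
    · apply ciSup_le
      rintro ⟨b, hb⟩
      obtain ⟨y, hy, w, hw, rfl⟩ := hsum b
      have hyB1 : y ∈ B1 := ⟨hy, w, hw, hb⟩
      have h1 : ‖z - y‖ ≤ farr z B1 := le_ciSup (hbddB1 z) (⟨y, hyB1⟩ : B1)
      have h2 : ‖w‖ ≤ farr z B1 := by
        have hw2 : ‖w‖ ≤ ⨆ w : B2, ‖(w : X)‖ :=
          le_ciSup hbddB2 (⟨w, hw, y, hy, hb⟩ : B2)
        exact hw2.trans (hle.trans (hradle z hz))
      calc ‖z - (y + w)‖ = max ‖z - y‖ ‖w‖ := hkey y hy w hw z hzY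
      _ ≤ farr z B1 := max_le h1 h2
    · apply ciSup_le
      rintro ⟨y, hy, w, hw, hyw⟩
      calc ‖z - y‖ ≤ max ‖z - y‖ ‖w‖ := le_max_left _ _
      _ = ‖z - (y + w)‖ := (hkey y hy w hw z hzY).symm
      _ ≤ farr z B := le_ciSup (hbddB z) (⟨y + w, hyw⟩ : B)
  have hrad : rad (Z : Set X) B = rad (Z : Set X) B1 := by
    unfold rad
    exact iInf_congr fun v => hfarr v v.2
  constructor
  · ext v
    simp only [cheb, mem_setOf_eq, Set.mem_sep_iff]
    exact and_congr_right fun hv => by rw [hfarr v hv, hrad]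
  · intro η hη
    ext v
    simp only [Set.mem_sep_iff, mem_setOf_eq]
    exact and_congr_right fun hv => by rw [hfarr v hv, hrad]
end
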